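/- Let 1 ≤ j ≤ m. The R-algebra map sending v_i ↦ v_i and z_i ↦ u·v_{m+1−i} induces an isomorphism R[v_1,…,v_m, z_1,…,z_m]/(v_j − 1, ∧²[V | H Z], Zᵗ·V − 2π) ≅ R[v_1,…,v_m, u]/(v_j − 1, u·(Σ_{i=1}^m v_i v_{m+1−i}) − 2π), with inverse sending u ↦ z_{m+1−j}. (This is the content of Remark 4.3(a): for every index i_0 the affine chart U_{i_0} of the splitting model admits the uniform presentation with the vector Z_2 and the relations ∧²[V_2 | H Z_2] = 0, Z_2ᵗV_2 = 2π.) -/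

import Mathlib

/-!
STATEMENT 12: For `1 ≤ j ≤ m`, the `R`-algebra map sending `vᵢ ↦ vᵢ` and
`zᵢ ↦ u·v_{m+1−i}` induces an isomorphism
`R[v,z]/(vⱼ − 1, ∧²[V | HZ], Zᵗ·V − 2π) ≅ R[v,u]/(vⱼ − 1, u·(Σᵢ vᵢ v_{m+1−i}) − 2π)`,
with inverse sending `u ↦ z_{m+1−j}`.  The `v`- and `z`-variables are indexed by
`Fin m ⊕ Fin m` (`inl` = `v`, `inr` = `z`); in 0-indexing `i ↦ m+1−i` is `Fin.rev`,
and `(HZ)ᵢ = z_{m+1−i} = z_{i.rev}`.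
-/

open MvPolynomial

/-- The ideal `(vⱼ − 1, ∧²[V | HZ], Zᵗ·V − 2π)` presenting the chart `U_{i₀}`. -/
noncomputable def chartIdealVZ (R : Type*) [CommRing R] (π : R) (m : ℕ) (j : Fin m) :
    Ideal (MvPolynomial (Fin m ⊕ Fin m) R) :=
  Ideal.span
    ({X (Sum.inl j) - 1} ∪
      {p | ∃ a b : Fin m, a < b ∧
        p = X (Sum.inl a) * X (Sum.inr b.rev) - X (Sum.inl b) * X (Sum.inr a.rev)} ∪
      {(∑ i : Fin m, X (Sum.inr i) * X (Sum.inl i)) - C (2 * π)})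

/-- The ideal `(vⱼ − 1, u·(Σᵢ vᵢ v_{m+1−i}) − 2π)`. -/
noncomputable def chartIdealVU (R : Type*) [CommRing R] (π : R) (m : ℕ) (j : Fin m) :
    Ideal (MvPolynomial (Fin m ⊕ Unit) R) :=
  Ideal.span
    {X (Sum.inl j) - 1,
      X (Sum.inr ()) * (∑ i : Fin m, X (Sum.inl i) * X (Sum.inl i.rev)) - C (2 * π)}

section Aux
variable {R : Type*} [CommRing R] {π : R} {m : ℕ} {j : Fin m}

local notation "I₁" => chartIdealVZ R π m j
local notation "I₂" => chartIdealVU R π m j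
local notation "mk₁" => Ideal.Quotient.mk (chartIdealVZ R π m j)
local notation "mk₂" => Ideal.Quotient.mk (chartIdealVU R π m j)

lemma lemA (a b : Fin m) :
    mk₁ (X (Sum.inl a) * X (Sum.inr b.rev)) = mk₁ (X (Sum.inl b) * X (Sum.inr a.rev)) := by
  rcases lt_trichotomy a b with h | rfl | h
  · rw [Ideal.Quotient.eq]
    exact Ideal.subset_span (Or.inl (Or.inr ⟨a, b, h, rfl⟩))
  · rfl
  · rw [Ideal.Quotient.eq]
    have h3 : (X (Sum.inl a) * X (Sum.inr b.rev) -
        X (Sum.inl b) * X (Sum.inr a.rev) : MvPolynomial (Fin m ⊕ Fin m) R) =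
        -(X (Sum.inl b) * X (Sum.inr a.rev) - X (Sum.inl a) * X (Sum.inr b.rev)) := by ring
    rw [h3]
    exact neg_mem (Ideal.subset_span (Or.inl (Or.inr ⟨b, a, h, rfl⟩)))

lemma lemB : mk₁ (X (Sum.inl j)) = 1 := by
  rw [show (1 : MvPolynomial (Fin m ⊕ Fin m) R ⧸ I₁) = mk₁ 1 from rfl, Ideal.Quotient.eq]
  exact Ideal.subset_span (Or.inl (Or.inl rfl))

lemma lemC : mk₁ (∑ i : Fin m, X (Sum.inr i) * X (Sum.inl i)) = mk₁ (C (2 * π)) := by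
  rw [Ideal.Quotient.eq]
  exact Ideal.subset_span (Or.inr rfl)

lemma lemB' : mk₂ (X (Sum.inl j)) = 1 := by
  rw [show (1 : MvPolynomial (Fin m ⊕ Unit) R ⧸ I₂) = mk₂ 1 from rfl, Ideal.Quotient.eq]
  exact Ideal.subset_span (Or.inl rfl)

lemma lemD : mk₂ (X (Sum.inr ()) * (∑ i : Fin m, X (Sum.inl i) * X (Sum.inl i.rev)))
    = mk₂ (C (2 * π)) := by
  rw [Ideal.Quotient.eq]
  exact Ideal.subset_span (Or.inr rfl)

lemma lemE : mk₁ (X (Sum.inr j.rev)) * ∑ i : Fin m, mk₁ (X (Sum.inl i)) * mk₁ (X (Sum.inl i.rev))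
    = mk₁ (C (2 * π)) := by
  have h1 : ∀ i : Fin m,
      mk₁ (X (Sum.inr j.rev)) * (mk₁ (X (Sum.inl i)) * mk₁ (X (Sum.inl i.rev)))
      = mk₁ (X (Sum.inl i.rev)) * mk₁ (X (Sum.inl j) * X (Sum.inr i.rev)) := by
    intro i
    have := lemA (R := R) (π := π) (j := j) i j
    rw [← this]
    rw [← map_mul, ← map_mul, ← map_mul]
    ring_nf
  rw [Finset.mul_sum]
  rw [Finset.sum_congr rfl fun i _ => h1 i]
  have h2 : ∀ i : Fin m, mk₁ (X (Sum.inl i.rev)) * mk₁ ((X (Sum.inl j) : MvPolynomial (Fin m ⊕ Fin m) R) * X (Sum.inr i.rev))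
      = mk₁ (X (Sum.inr i.rev) * X (Sum.inl i.rev)) := by
    intro i
    rw [map_mul, map_mul, lemB, one_mul]; ring
  rw [Finset.sum_congr rfl fun i _ => h2 i, ← map_sum, ← lemC]
  congr 1
  exact Fintype.sum_equiv Fin.revPerm _ _ (fun i => rfl)

variable (R π m j) in
noncomputable def fwd : MvPolynomial (Fin m ⊕ Fin m) R →ₐ[R]
    (MvPolynomial (Fin m ⊕ Unit) R ⧸ chartIdealVU R π m j) :=
  aeval (Sum.elim (fun i => mk₂ (X (Sum.inl i)))
    (fun i => mk₂ (X (Sum.inr ()) * X (Sum.inl i.rev))))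

variable (R π m j) in
noncomputable def bwd : MvPolynomial (Fin m ⊕ Unit) R →ₐ[R]
    (MvPolynomial (Fin m ⊕ Fin m) R ⧸ chartIdealVZ R π m j) :=
  aeval (Sum.elim (fun i => mk₁ (X (Sum.inl i)))
    (fun _ => mk₁ (X (Sum.inr j.rev))))

lemma fwd_ker : ∀ a ∈ I₁, fwd R π m j a = 0 := by
  have hle : I₁ ≤ RingHom.ker (fwd R π m j) := by
    rw [chartIdealVZ]
    refine Ideal.span_le.2 ?_
    rintro p hp
    simp only [Set.mem_union, Set.mem_singleton_iff, Set.mem_setOf_eq] at hp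
    rw [SetLike.mem_coe, RingHom.mem_ker]
    obtain (hp | ⟨a, b, hab, rfl⟩) | hp := hp
    · subst hp
      simp only [fwd, map_sub, map_one, aeval_X, Sum.elim_inl]
      rw [lemB', sub_self]
    · simp only [fwd, map_sub, map_mul, aeval_X, Sum.elim_inl, Sum.elim_inr, Fin.rev_rev]
      ring
    · subst hp
      simp only [fwd, map_sub, map_sum, map_mul, aeval_X, Sum.elim_inl, Sum.elim_inr, aeval_C]
      rw [← map_mul, show (algebraMap R (MvPolynomial (Fin m ⊕ Unit) R ⧸ I₂)) (2*π)
          = mk₂ (C (2*π)) from rfl, ← lemD, sub_eq_zero, map_mul, map_sum, Finset.mul_sum]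
      refine Finset.sum_congr rfl fun i _ => ?_
      rw [map_mul]
      ring
  exact fun a ha => hle ha

lemma bwd_ker : ∀ a ∈ I₂, bwd R π m j a = 0 := by
  have hle : I₂ ≤ RingHom.ker (bwd R π m j) := by
    rw [chartIdealVU]
    refine Ideal.span_le.2 ?_
    rintro p hp
    simp only [Set.mem_insert_iff, Set.mem_singleton_iff] at hp
    rw [SetLike.mem_coe, RingHom.mem_ker]
    obtain hp | hp := hp
    · subst hp
      simp only [bwd, map_sub, map_one, aeval_X, Sum.elim_inl]
      rw [lemB, sub_self]
    · subst hp
      simp only [bwd, map_sub, map_mul, map_sum, aeval_X, Sum.elim_inl, Sum.elim_inr, aeval_C]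
      rw [← map_mul, show (algebraMap R (MvPolynomial (Fin m ⊕ Fin m) R ⧸ I₁)) (2*π)
          = mk₁ (C (2*π)) from rfl, sub_eq_zero]
      exact lemE
  exact fun a ha => hle ha

variable (R π m j) in
noncomputable def fQ : (MvPolynomial (Fin m ⊕ Fin m) R ⧸ chartIdealVZ R π m j) →ₐ[R]
    (MvPolynomial (Fin m ⊕ Unit) R ⧸ chartIdealVU R π m j) :=
  Ideal.Quotient.liftₐ _ (fwd R π m j) fwd_ker

variable (R π m j) in
noncomputable def gQ : (MvPolynomial (Fin m ⊕ Unit) R ⧸ chartIdealVU R π m j) →ₐ[R]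
    (MvPolynomial (Fin m ⊕ Fin m) R ⧸ chartIdealVZ R π m j) :=
  Ideal.Quotient.liftₐ _ (bwd R π m j) bwd_ker

lemma fQ_mk (p) : fQ R π m j (mk₁ p) = fwd R π m j p := by
  simp [fQ, Ideal.Quotient.liftₐ_apply, Ideal.Quotient.lift_mk]
  exact Ideal.Quotient.lift_mk _ _ _

lemma gQ_mk (p) : gQ R π m j (mk₂ p) = bwd R π m j p := by
  simp [gQ, Ideal.Quotient.liftₐ_apply, Ideal.Quotient.lift_mk]
  exact Ideal.Quotient.lift_mk _ _ _

lemma fg : (fQ R π m j).comp (gQ R π m j) = AlgHom.id R _ := by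
  refine Ideal.Quotient.algHom_ext _ ?_
  refine MvPolynomial.algHom_ext fun s => ?_
  cases s with
  | inl i =>
      simp only [AlgHom.comp_apply, Ideal.Quotient.mkₐ_eq_mk, AlgHom.id_apply]
      rw [gQ_mk]
      simp only [bwd, aeval_X, Sum.elim_inl]
      rw [fQ_mk]
      simp [fwd]
  | inr u =>
      simp only [AlgHom.comp_apply, Ideal.Quotient.mkₐ_eq_mk, AlgHom.id_apply]
      rw [gQ_mk]
      simp only [bwd, aeval_X, Sum.elim_inr]
      rw [fQ_mk]
      simp only [fwd, aeval_X, Sum.elim_inr, Fin.rev_rev]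
      rw [map_mul, lemB', mul_one]

lemma gf : (gQ R π m j).comp (fQ R π m j) = AlgHom.id R _ := by
  refine Ideal.Quotient.algHom_ext _ ?_
  refine MvPolynomial.algHom_ext fun s => ?_
  cases s with
  | inl i =>
      simp only [AlgHom.comp_apply, Ideal.Quotient.mkₐ_eq_mk, AlgHom.id_apply]
      rw [fQ_mk]
      simp only [fwd, aeval_X, Sum.elim_inl]
      rw [gQ_mk]
      simp [bwd]
  | inr i =>
      simp only [AlgHom.comp_apply, Ideal.Quotient.mkₐ_eq_mk, AlgHom.id_apply]
      rw [fQ_mk]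
      simp only [fwd, aeval_X, Sum.elim_inr]
      rw [gQ_mk]
      simp only [bwd, map_mul, aeval_X, Sum.elim_inl, Sum.elim_inr]
      have h := lemA (R := R) (π := π) (j := j) i.rev j
      rw [Fin.rev_rev] at h
      calc mk₁ (X (Sum.inr j.rev)) * mk₁ (X (Sum.inl i.rev))
          = mk₁ (X (Sum.inl i.rev) * X (Sum.inr j.rev)) := by rw [map_mul]; ring
        _ = mk₁ (X (Sum.inl j) * X (Sum.inr i)) := h
        _ = mk₁ (X (Sum.inr i)) := by rw [map_mul, lemB, one_mul]

end Aux

theorem chart_uniform_presentation (R : Type*) [CommRing R] (π : R)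
    (m : ℕ) (hm : 2 ≤ m) (j : Fin m) :
    ∃ e : (MvPolynomial (Fin m ⊕ Fin m) R ⧸ chartIdealVZ R π m j) ≃ₐ[R]
        (MvPolynomial (Fin m ⊕ Unit) R ⧸ chartIdealVU R π m j),
      (∀ i : Fin m,
        e (Ideal.Quotient.mk (chartIdealVZ R π m j) (X (Sum.inl i))) =
          Ideal.Quotient.mk (chartIdealVU R π m j) (X (Sum.inl i))) ∧
      (∀ i : Fin m,
        e (Ideal.Quotient.mk (chartIdealVZ R π m j) (X (Sum.inr i))) =
          Ideal.Quotient.mk (chartIdealVU R π m j)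
            (X (Sum.inr ()) * X (Sum.inl i.rev))) ∧
      e.symm (Ideal.Quotient.mk (chartIdealVU R π m j) (X (Sum.inr ()))) =
        Ideal.Quotient.mk (chartIdealVZ R π m j) (X (Sum.inr j.rev)) := by
  refine ⟨AlgEquiv.ofAlgHom (fQ R π m j) (gQ R π m j) fg gf, fun i => ?_, fun i => ?_, ?_⟩
  · have hc : ⇑(AlgEquiv.ofAlgHom (fQ R π m j) (gQ R π m j) fg gf) = ⇑(fQ R π m j) := rfl
    rw [hc, fQ_mk]; simp [fwd]
  · have hc : ⇑(AlgEquiv.ofAlgHom (fQ R π m j) (gQ R π m j) fg gf) = ⇑(fQ R π m j) := rfl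
    rw [hc, fQ_mk]; simp [fwd]
  · have hc : ⇑(AlgEquiv.ofAlgHom (fQ R π m j) (gQ R π m j) fg gf).symm = ⇑(gQ R π m j) := rfl
    rw [hc, gQ_mk]; simp [bwd]
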